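/- Let a, b, c, d be integers. Every 2×2 matrix whose four entries are a, b, c, d in some order (i.e., each of the 24 matrices obtained by permuting the entries) has integer eigenvalues if and only if there exist integers u, v, w, x, y, z such that u² = (a − d)² + 4bc, v² = (b − c)² + 4ad, w² = (a − b)² + 4cd, x² = (c − d)² + 4ab, y² = (a − c)² + 4bd, and z² = (b − d)² + 4ac. -/
import Mathlib


/-- A 2×2 integer matrix has integer eigenvalues if its characteristic polynomial
splits over ℤ, i.e. there are integers λ₁, λ₂ with λ₁ + λ₂ = trace M and λ₁·λ₂ = det M. -/
def hasIntEigenvalues (M : Matrix (Fin 2) (Fin 2) ℤ) : Prop :=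
  ∃ lam1 lam2 : ℤ, lam1 + lam2 = Matrix.trace M ∧ lam1 * lam2 = Matrix.det M

/-- The multiset of entries of a 2×2 integer matrix. -/
def entriesMultiset (M : Matrix (Fin 2) (Fin 2) ℤ) : Multiset ℤ :=
  {M 0 0, M 0 1, M 1 0, M 1 1}

lemma pair_cases' (r s y z : ℤ) (h : ({r, s} : Multiset ℤ) = {y, z}) :
    (r = y ∧ s = z) ∨ (r = z ∧ s = y) := by
  have hr : r ∈ ({y, z} : Multiset ℤ) := by rw [← h]; simp
  simp only [Multiset.insert_eq_cons, Multiset.mem_cons, Multiset.mem_singleton] at hr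
  rcases hr with hr | hr
  · rw [hr] at h
    exact Or.inl ⟨hr, by simpa [Multiset.insert_eq_cons, Multiset.cons_inj_right] using h⟩
  · rw [hr, show ({y, z} : Multiset ℤ) = {z, y} from Multiset.cons_swap y z 0] at h
    exact Or.inr ⟨hr, by simpa [Multiset.insert_eq_cons, Multiset.cons_inj_right] using h⟩

lemma triple_cases' (q r s x y z : ℤ) (h : ({q, r, s} : Multiset ℤ) = {x, y, z}) :
    (q = x ∧ (({r, s} : Multiset ℤ) = {y, z})) ∨
    (q = y ∧ (({r, s} : Multiset ℤ) = {x, z})) ∨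
    (q = z ∧ (({r, s} : Multiset ℤ) = {x, y})) := by
  have hq : q ∈ ({x, y, z} : Multiset ℤ) := by rw [← h]; simp
  simp only [Multiset.insert_eq_cons, Multiset.mem_cons, Multiset.mem_singleton] at hq
  rcases hq with hq | hq | hq
  · rw [hq] at h
    exact Or.inl ⟨hq, by simpa [Multiset.insert_eq_cons, Multiset.cons_inj_right] using h⟩
  · rw [hq, show ({x, y, z} : Multiset ℤ) = {y, x, z} from Multiset.cons_swap x y _] at h
    exact Or.inr (Or.inl ⟨hq, by simpa [Multiset.insert_eq_cons, Multiset.cons_inj_right] using h⟩)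
  · rw [hq, show ({x, y, z} : Multiset ℤ) = {z, x, y} from by
      rw [show ({y, z} : Multiset ℤ) = {z, y} from Multiset.cons_swap y z 0]
      exact Multiset.cons_swap x z _] at h
    exact Or.inr (Or.inr ⟨hq, by simpa [Multiset.insert_eq_cons, Multiset.cons_inj_right] using h⟩)

lemma quad_cases' (p q r s a b c d : ℤ) (h : ({p, q, r, s} : Multiset ℤ) = {a, b, c, d}) :
    (p = a ∧ (({q, r, s} : Multiset ℤ) = {b, c, d})) ∨
    (p = b ∧ (({q, r, s} : Multiset ℤ) = {a, c, d})) ∨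
    (p = c ∧ (({q, r, s} : Multiset ℤ) = {a, b, d})) ∨
    (p = d ∧ (({q, r, s} : Multiset ℤ) = {a, b, c})) := by
  have hp : p ∈ ({a, b, c, d} : Multiset ℤ) := by rw [← h]; simp
  simp only [Multiset.insert_eq_cons, Multiset.mem_cons, Multiset.mem_singleton] at hp
  rcases hp with hp | hp | hp | hp
  · rw [hp] at h
    exact Or.inl ⟨hp, by simpa [Multiset.insert_eq_cons, Multiset.cons_inj_right] using h⟩
  · rw [hp, show ({a, b, c, d} : Multiset ℤ) = {b, a, c, d} from Multiset.cons_swap a b _] at h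
    exact Or.inr (Or.inl ⟨hp, by simpa [Multiset.insert_eq_cons, Multiset.cons_inj_right] using h⟩)
  · rw [hp, show ({a, b, c, d} : Multiset ℤ) = {c, a, b, d} from by
      rw [show ({b, c, d} : Multiset ℤ) = {c, b, d} from Multiset.cons_swap b c _]
      exact Multiset.cons_swap a c _] at h
    exact Or.inr (Or.inr (Or.inl ⟨hp, by
      simpa [Multiset.insert_eq_cons, Multiset.cons_inj_right] using h⟩))
  · rw [hp, show ({a, b, c, d} : Multiset ℤ) = {d, a, b, c} from by
      rw [show ({c, d} : Multiset ℤ) = {d, c} from Multiset.cons_swap c d 0,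
          show ({b, d, c} : Multiset ℤ) = {d, b, c} from Multiset.cons_swap b d _]
      exact Multiset.cons_swap a d _] at h
    exact Or.inr (Or.inr (Or.inr ⟨hp, by
      simpa [Multiset.insert_eq_cons, Multiset.cons_inj_right] using h⟩))

lemma disc_cases' (p q r s a b c d : ℤ) (h : ({p, q, r, s} : Multiset ℤ) = {a, b, c, d}) :
    (p - s) ^ 2 + 4 * q * r = (a - d) ^ 2 + 4 * b * c ∨
    (p - s) ^ 2 + 4 * q * r = (b - c) ^ 2 + 4 * a * d ∨
    (p - s) ^ 2 + 4 * q * r = (a - b) ^ 2 + 4 * c * d ∨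
    (p - s) ^ 2 + 4 * q * r = (c - d) ^ 2 + 4 * a * b ∨
    (p - s) ^ 2 + 4 * q * r = (a - c) ^ 2 + 4 * b * d ∨
    (p - s) ^ 2 + 4 * q * r = (b - d) ^ 2 + 4 * a * c := by
  rcases quad_cases' p q r s a b c d h with ⟨hp, h3⟩ | ⟨hp, h3⟩ | ⟨hp, h3⟩ | ⟨hp, h3⟩ <;>
  rcases triple_cases' _ _ _ _ _ _ h3 with ⟨hq, h2⟩ | ⟨hq, h2⟩ | ⟨hq, h2⟩ <;>
  rcases pair_cases' _ _ _ _ h2 with ⟨hr, hs⟩ | ⟨hr, hs⟩ <;>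
  rw [hp, hq, hr, hs] <;>
  first
    | (left; ring1)
    | (right; left; ring1)
    | (right; right; left; ring1)
    | (right; right; right; left; ring1)
    | (right; right; right; right; left; ring1)
    | (right; right; right; right; right; ring1)

lemma hasInt_of_sq' (s p t : ℤ) (ht : t ^ 2 = s ^ 2 - 4 * p) :
    ∃ l1 l2 : ℤ, l1 + l2 = s ∧ l1 * l2 = p := by
  have h1 : Even (t ^ 2) ↔ Even (s ^ 2) := by
    rw [ht, Int.even_sub]
    simp [show Even (4 * p) from ⟨2 * p, by ring⟩]
  rw [Int.even_pow' (by norm_num : (2:ℕ) ≠ 0), Int.even_pow' (by norm_num : (2:ℕ) ≠ 0)] at h1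
  have hpar : Even (s + t) := Int.even_add.mpr h1.symm
  obtain ⟨k, hk⟩ := hpar
  rw [show t = k + k - s by omega] at ht
  refine ⟨k, s - k, by ring, ?_⟩
  have h4 : 4 * (k * (s - k)) = 4 * p := by linear_combination (-1 : ℤ) * ht
  linarith

lemma exists_sq' (p q r s : ℤ) (h : hasIntEigenvalues !![p, q; r, s]) :
    ∃ t : ℤ, t ^ 2 = (p - s) ^ 2 + 4 * q * r := by
  obtain ⟨l1, l2, h1, h2⟩ := h
  rw [Matrix.trace_fin_two_of] at h1
  rw [Matrix.det_fin_two_of] at h2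
  refine ⟨l1 - l2, ?_⟩
  have : (l1 - l2) ^ 2 = (l1 + l2) ^ 2 - 4 * (l1 * l2) := by ring
  rw [this, h1, h2]; ring

/-- Every 2×2 matrix whose entries are a, b, c, d in some order has integer
eigenvalues iff the six discriminant conditions admit integer solutions. -/
theorem stmt_2 (a b c d : ℤ) :
    (∀ M : Matrix (Fin 2) (Fin 2) ℤ,
        entriesMultiset M = {a, b, c, d} → hasIntEigenvalues M) ↔
    (∃ u v w x y z : ℤ,
        u ^ 2 = (a - d) ^ 2 + 4 * b * c ∧
        v ^ 2 = (b - c) ^ 2 + 4 * a * d ∧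
        w ^ 2 = (a - b) ^ 2 + 4 * c * d ∧
        x ^ 2 = (c - d) ^ 2 + 4 * a * b ∧
        y ^ 2 = (a - c) ^ 2 + 4 * b * d ∧
        z ^ 2 = (b - d) ^ 2 + 4 * a * c) := by
  constructor
  · intro h
    obtain ⟨u, hu⟩ := exists_sq' a b c d (h !![a, b; c, d] (by
      simp [entriesMultiset]))
    obtain ⟨v, hv⟩ := exists_sq' b a d c (h !![b, a; d, c] (by
      simp only [entriesMultiset, Matrix.cons_val', Matrix.cons_val_zero, Matrix.cons_val_one,
        Matrix.head_cons, Matrix.empty_val', Matrix.cons_val_fin_one, Matrix.head_fin_const,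
        Matrix.of_apply]
      simp only [Multiset.insert_eq_cons, ← Multiset.cons_zero]
      rw [Multiset.cons_swap b a, Multiset.cons_swap d c]))
    obtain ⟨w, hw⟩ := exists_sq' a c d b (h !![a, c; d, b] (by
      simp only [entriesMultiset, Matrix.cons_val', Matrix.cons_val_zero, Matrix.cons_val_one,
        Matrix.head_cons, Matrix.empty_val', Matrix.cons_val_fin_one, Matrix.head_fin_const,
        Matrix.of_apply]
      simp only [Multiset.insert_eq_cons, ← Multiset.cons_zero]
      rw [Multiset.cons_swap d b, Multiset.cons_swap c b]))
    obtain ⟨x, hx⟩ := exists_sq' c a b d (h !![c, a; b, d] (by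
      simp only [entriesMultiset, Matrix.cons_val', Matrix.cons_val_zero, Matrix.cons_val_one,
        Matrix.head_cons, Matrix.empty_val', Matrix.cons_val_fin_one, Matrix.head_fin_const,
        Matrix.of_apply]
      simp only [Multiset.insert_eq_cons, ← Multiset.cons_zero]
      rw [Multiset.cons_swap c a, Multiset.cons_swap c b]))
    obtain ⟨y, hy⟩ := exists_sq' a b d c (h !![a, b; d, c] (by
      simp only [entriesMultiset, Matrix.cons_val', Matrix.cons_val_zero, Matrix.cons_val_one,
        Matrix.head_cons, Matrix.empty_val', Matrix.cons_val_fin_one, Matrix.head_fin_const,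
        Matrix.of_apply]
      simp only [Multiset.insert_eq_cons, ← Multiset.cons_zero]
      rw [Multiset.cons_swap d c]))
    obtain ⟨z, hz⟩ := exists_sq' b a c d (h !![b, a; c, d] (by
      simp only [entriesMultiset, Matrix.cons_val', Matrix.cons_val_zero, Matrix.cons_val_one,
        Matrix.head_cons, Matrix.empty_val', Matrix.cons_val_fin_one, Matrix.head_fin_const,
        Matrix.of_apply]
      simp only [Multiset.insert_eq_cons, ← Multiset.cons_zero]
      rw [Multiset.cons_swap b a]))
    exact ⟨u, v, w, x, y, z, hu, hv, hw, hx, hy, hz⟩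
  · rintro ⟨u, v, w, x, y, z, hu, hv, hw, hx, hy, hz⟩ M hM
    have hM' : ({M 0 0, M 0 1, M 1 0, M 1 1} : Multiset ℤ) = {a, b, c, d} := hM
    have hd := disc_cases' (M 0 0) (M 0 1) (M 1 0) (M 1 1) a b c d hM'
    rw [hasIntEigenvalues, Matrix.trace_fin_two, Matrix.det_fin_two]
    rcases hd with h | h | h | h | h | h
    · exact hasInt_of_sq' _ _ u (by rw [hu, ← h]; ring)
    · exact hasInt_of_sq' _ _ v (by rw [hv, ← h]; ring)
    · exact hasInt_of_sq' _ _ w (by rw [hw, ← h]; ring)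
    · exact hasInt_of_sq' _ _ x (by rw [hx, ← h]; ring)
    · exact hasInt_of_sq' _ _ y (by rw [hy, ← h]; ring)
    · exact hasInt_of_sq' _ _ z (by rw [hz, ← h]; ring)
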